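/- Let G = (V,E) be a simple graph and let G' be its subdivision graph: vertices V ∪ {v_e : e ∈ E}, with v_{(a,b)} joined to a and to b for every edge (a,b) ∈ E. Regard V as facilities and the subdivision vertices as unit-weight customers. Then for every R ⊆ V, the subdivision vertex v_{(a,b)} is disconnected from all facilities of V \ R in G' with R deleted if and only if both a ∈ R and b ∈ R. Consequently, the number of disconnected customers equals the number of edges of the induced subgraph G[R]. -/

import Mathlib

/-- The subdivision graph of G: vertices V ⊕ E(G), with the subdivision vertex
of an edge joined to its two endpoints. -/
def subdivisionGraph {V : Type*} (G : SimpleGraph V) :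
    SimpleGraph (V ⊕ G.edgeSet) :=
  SimpleGraph.fromRel (fun x y => ∃ (a : V) (e : G.edgeSet),
    x = Sum.inl a ∧ y = Sum.inr e ∧ a ∈ (e : Sym2 V))

/-- In the subdivision-graph interdiction instance (facilities V,
subdivision vertices as unit customers), after deleting R ⊆ V a subdivision
vertex v_e is disconnected from all remaining facilities iff both endpoints of
e lie in R; consequently the number of disconnected customers equals the
number of edges of the induced subgraph G[R]. -/
theorem stmt7 {V : Type*} [Fintype V] (G : SimpleGraph V) :
    ∀ R : Set V,
      (∀ e : G.edgeSet,
        ((¬ ∃ a : V, a ∉ R ∧ ∃ p : (subdivisionGraph G).Walk (Sum.inr e) (Sum.inl a),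
            ∀ x ∈ p.support, ∀ b : V, x = Sum.inl b → b ∉ R) ↔
          ∀ a ∈ (e : Sym2 V), a ∈ R)) ∧
      ({e : G.edgeSet | ¬ ∃ a : V, a ∉ R ∧
          ∃ p : (subdivisionGraph G).Walk (Sum.inr e) (Sum.inl a),
            ∀ x ∈ p.support, ∀ b : V, x = Sum.inl b → b ∉ R}.ncard =
        {e : Sym2 V | e ∈ G.edgeSet ∧ ∀ a ∈ e, a ∈ R}.ncard) := by
  intro R
  have key : ∀ e : G.edgeSet,
      ((¬ ∃ a : V, a ∉ R ∧ ∃ p : (subdivisionGraph G).Walk (Sum.inr e) (Sum.inl a),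
          ∀ x ∈ p.support, ∀ b : V, x = Sum.inl b → b ∉ R) ↔
        ∀ a ∈ (e : Sym2 V), a ∈ R) := by
    intro e
    constructor
    · intro h a ha
      by_contra haR
      apply h
      refine ⟨a, haR, SimpleGraph.Walk.cons ?_ SimpleGraph.Walk.nil, ?_⟩
      · exact ⟨by simp, Or.inr ⟨a, e, rfl, rfl, ha⟩⟩
      · intro x hx b hxb
        change x ∈ [Sum.inr e, Sum.inl a] at hx
        simp only [SimpleGraph.Walk.support_cons, SimpleGraph.Walk.support_nil,
          List.mem_cons, List.mem_singleton] at hx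
        rcases hx with hx | hx | hx
        · subst hx; cases hxb
        · subst hx; injection hxb with h'; subst h'; exact haR
        · cases hx
    · rintro hall ⟨a, haR, p, hp⟩
      cases p with
      | cons h q =>
        rename_i x
        rw [subdivisionGraph, SimpleGraph.fromRel_adj] at h
        obtain ⟨hne, hr | hr⟩ := h
        · obtain ⟨a', e', h1, _, _⟩ := hr; cases h1
        · obtain ⟨a', e', h1, h2, hmem⟩ := hr
          injection h2 with h2'
          subst h2'
          exact hp x (by simp) a' h1 (hall a' hmem)
  refine ⟨key, ?_⟩
  have hset : {e : G.edgeSet | ¬ ∃ a : V, a ∉ R ∧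
      ∃ p : (subdivisionGraph G).Walk (Sum.inr e) (Sum.inl a),
        ∀ x ∈ p.support, ∀ b : V, x = Sum.inl b → b ∉ R} =
      {e : G.edgeSet | ∀ a ∈ (e : Sym2 V), a ∈ R} := by
    ext e; exact key e
  rw [hset]
  have himg : Subtype.val '' {e : G.edgeSet | ∀ a ∈ (e : Sym2 V), a ∈ R} =
      {e : Sym2 V | e ∈ G.edgeSet ∧ ∀ a ∈ e, a ∈ R} := by
    ext x
    simp [Set.mem_image, and_comm]
  rw [← himg, Set.ncard_image_of_injective _ Subtype.val_injective]
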